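/- Let r_1,…,r_N ≥ 0. Define s_1 = Σ_{i=1}^N i·r_i, s_2 = Σ_{i=1}^N i²·r_i, and suppose s_1 > 0. Let δ = s_2/s_1 and θ = δ − ⌊δ⌋. Then Σ_{i=1}^N r_i ≥ θ·s_1²/(s_2 + (1−θ)s_1) + (1−θ)·s_1²/(s_2 − θ·s_1), and the right-hand side is at least s_1²/s_2. -/

import Mathlib

open Finset

theorem frolov_cor2 (N : ℕ) (r : ℕ → ℝ)
    (hr : ∀ i ∈ Finset.Icc 1 N, 0 ≤ r i)
    (s₁ s₂ δ θ : ℝ)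
    (hs₁ : s₁ = ∑ i ∈ Finset.Icc 1 N, (i : ℝ) * r i)
    (hs₂ : s₂ = ∑ i ∈ Finset.Icc 1 N, (i : ℝ) ^ 2 * r i)
    (hpos : 0 < s₁)
    (hδ : δ = s₂ / s₁) (hθ : θ = δ - ⌊δ⌋) :
    ∑ i ∈ Finset.Icc 1 N, r i
      ≥ θ * s₁ ^ 2 / (s₂ + (1 - θ) * s₁) + (1 - θ) * s₁ ^ 2 / (s₂ - θ * s₁)
    ∧ θ * s₁ ^ 2 / (s₂ + (1 - θ) * s₁) + (1 - θ) * s₁ ^ 2 / (s₂ - θ * s₁)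
      ≥ s₁ ^ 2 / s₂ := by
  set M : ℝ := (⌊δ⌋ : ℝ) with hM
  -- basic fractional part facts
  have hθ0 : 0 ≤ θ := by rw [hθ]; linarith [Int.floor_le δ]
  have hθ1 : θ < 1 := by rw [hθ]; linarith [Int.lt_floor_add_one δ]
  -- s₂ ≥ s₁
  have h21 : s₁ ≤ s₂ := by
    rw [hs₁, hs₂]
    apply Finset.sum_le_sum
    intro i hi
    have hi1 : 1 ≤ i := (Finset.mem_Icc.mp hi).1
    have hri := hr i hi
    have h1 : (1:ℝ) ≤ (i:ℝ) := by exact_mod_cast hi1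
    nlinarith [mul_nonneg (mul_nonneg (by linarith : (0:ℝ) ≤ (i:ℝ) - 1) (by linarith : (0:ℝ) ≤ (i:ℝ))) hri]
  have hδ1 : 1 ≤ δ := by
    rw [hδ, le_div_iff₀ hpos]; linarith
  have hM1 : (1:ℝ) ≤ M := by
    have h1 : (1:ℤ) ≤ ⌊δ⌋ := Int.le_floor.mpr (by exact_mod_cast hδ1)
    rw [hM]; exact_mod_cast h1
  -- s₂ = (M + θ) s₁
  have hs2eq : s₂ = (M + θ) * s₁ := by
    have : δ * s₁ = s₂ := by rw [hδ]; field_simp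
    rw [← this, hθ]; ring
  -- key pointwise inequality summed
  have key : 0 ≤ ∑ i ∈ Finset.Icc 1 N, ((i:ℝ) - M) * ((i:ℝ) - (M + 1)) * r i := by
    apply Finset.sum_nonneg
    intro i hi
    apply mul_nonneg _ (hr i hi)
    rcases le_or_gt (i : ℤ) ⌊δ⌋ with h | h
    · have h1 : (i:ℝ) ≤ M := by rw [hM]; exact_mod_cast h
      nlinarith
    · have h1 : ⌊δ⌋ + 1 ≤ (i:ℤ) := h
      have h2 : M + 1 ≤ (i:ℝ) := by rw [hM]; exact_mod_cast h1
      exact mul_nonneg (by linarith) (by linarith)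
  have expand : ∑ i ∈ Finset.Icc 1 N, ((i:ℝ) - M) * ((i:ℝ) - (M + 1)) * r i
      = s₂ - (2 * M + 1) * s₁ + M * (M + 1) * ∑ i ∈ Finset.Icc 1 N, r i := by
    rw [hs₁, hs₂, Finset.mul_sum, Finset.mul_sum, ← Finset.sum_sub_distrib,
      ← Finset.sum_add_distrib]
    apply Finset.sum_congr rfl
    intro i _
    ring
  set R := ∑ i ∈ Finset.Icc 1 N, r i with hR
  have H : s₂ - (2 * M + 1) * s₁ + M * (M + 1) * R ≥ 0 := by
    rw [← expand]; exact key
  -- rewrite denominators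
  have hd1 : s₂ + (1 - θ) * s₁ = (M + 1) * s₁ := by rw [hs2eq]; ring
  have hd2 : s₂ - θ * s₁ = M * s₁ := by rw [hs2eq]; ring
  have hM0 : (0:ℝ) < M := by linarith
  have hM10 : (0:ℝ) < M + 1 := by linarith
  have hs2pos : 0 < s₂ := by linarith
  have e1 : θ * s₁ ^ 2 / ((M + 1) * s₁) = θ * s₁ / (M + 1) := by
    field_simp
  have e2 : (1 - θ) * s₁ ^ 2 / (M * s₁) = (1 - θ) * s₁ / M := by
    field_simp
  rw [hd1, hd2, e1, e2]
  constructor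
  · rw [ge_iff_le, div_add_div _ _ (ne_of_gt hM10) (ne_of_gt hM0),
      div_le_iff₀ (by positivity)]
    nlinarith [H, hs2eq]
  · rw [ge_iff_le, div_add_div _ _ (ne_of_gt hM10) (ne_of_gt hM0),
      div_le_div_iff₀ hs2pos (mul_pos hM10 hM0), hs2eq]
    have hkey : 0 ≤ θ * (1 - θ) * s₁ ^ 2 := mul_nonneg (mul_nonneg hθ0 (by linarith)) (sq_nonneg s₁)
    nlinarith [hkey, sq_nonneg s₁]
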